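/- arXiv:1609.09663 — 2 statements merged into one kernel-verified Lean document; each statement's English description precedes it below -/
import Mathlib

section
/- Let L be a lattice with least element 0 whose zero-divisor graph (vertices are nonzero elements x with x ∧ y = 0 for some nonzero y; edges join x,y with x ∧ y = 0) has nonempty vertex set. Then the zero-divisor graph is connected and its diameter is at most 3. -/
/-- An element is join-reducible if it is the join of two elements both different from it. -/
def JoinReducible {L : Type*} [Lattice L] (a : L) : Prop :=
  ∃ p q : L, p ≠ a ∧ q ≠ a ∧ p ⊔ q = a

/-- The set of nonzero zero-divisors of a lattice with least element. -/
def zdvSet (L : Type*) [Lattice L] [OrderBot L] : Set L :=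
  {x | x ≠ ⊥ ∧ ∃ y : L, y ≠ ⊥ ∧ x ⊓ y = ⊥}

/-- The zero-divisor graph of a lattice with least element. -/
def zdvGraph (L : Type*) [Lattice L] [OrderBot L] : SimpleGraph (zdvSet L) where
  Adj x y := x ≠ y ∧ (x : L) ⊓ (y : L) = ⊥
  symm := ⟨fun x y ⟨h1, h2⟩ => ⟨h1.symm, by rwa [inf_comm]⟩⟩
  loopless := ⟨fun x ⟨h1, _⟩ => h1 rfl⟩

lemma zdv_adj {L : Type*} [Lattice L] [OrderBot L] {u v : zdvSet L}
    (h : (u : L) ⊓ (v : L) = ⊥) (hu : (u : L) ≠ ⊥) : (zdvGraph L).Adj u v := by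
  refine ⟨?_, h⟩
  intro he
  apply hu
  have : (u : L) ⊓ (u : L) = ⊥ := by rw [he] at h ⊢; exact h
  simpa using this

lemma zdv_walk {L : Type*} [Lattice L] [OrderBot L] (u v : zdvSet L) :
    ∃ p : (zdvGraph L).Walk u v, p.length ≤ 3 := by
  by_cases huv : u = v
  · subst huv; exact ⟨.nil, by simp⟩
  obtain ⟨hx0, a, ha0, hxa⟩ := u.2
  obtain ⟨hy0, b, hb0, hyb⟩ := v.2
  by_cases hadj : (u : L) ⊓ (v : L) = ⊥
  · exact ⟨.cons (show (zdvGraph L).Adj u v from ⟨huv, hadj⟩) .nil, by simp⟩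
  have haS : a ∈ zdvSet L := ⟨ha0, u, hx0, by rwa [inf_comm]⟩
  have hbS : b ∈ zdvSet L := ⟨hb0, v, hy0, by rwa [inf_comm]⟩
  by_cases hay : a ⊓ (v : L) = ⊥
  · -- path u - a - v
    refine ⟨.cons (zdv_adj ?_ hx0) (.cons (zdv_adj (u := ⟨a, haS⟩) hay ha0) .nil), by simp⟩
    exact hxa
  by_cases hbx : (u : L) ⊓ b = ⊥
  · refine ⟨.cons (zdv_adj (v := ⟨b, hbS⟩) hbx hx0)
      (.cons (zdv_adj ?_ hb0) .nil), by simp⟩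
    rwa [inf_comm] at hyb
  by_cases hab : a ⊓ b = ⊥
  · -- path u - a - b - v
    have h1 : (u : L) ⊓ a = ⊥ := hxa
    have h2 : b ⊓ (v : L) = ⊥ := by rwa [inf_comm] at hyb
    exact ⟨.cons (zdv_adj (v := ⟨a, haS⟩) h1 hx0)
      (.cons (zdv_adj (u := ⟨a, haS⟩) (v := ⟨b, hbS⟩) hab ha0)
      (.cons (zdv_adj (u := ⟨b, hbS⟩) h2 hb0) .nil)), by simp⟩
  · -- a ⊓ b ≠ ⊥ : path u - (a⊓b) - v
    have h1 : (u : L) ⊓ (a ⊓ b) = ⊥ := by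
      refine le_antisymm ?_ bot_le
      calc (u : L) ⊓ (a ⊓ b) ≤ (u : L) ⊓ a := inf_le_inf_left _ inf_le_left
        _ = ⊥ := hxa
    have h2 : (a ⊓ b) ⊓ (v : L) = ⊥ := by
      refine le_antisymm ?_ bot_le
      calc (a ⊓ b) ⊓ (v : L) ≤ b ⊓ (v : L) := inf_le_inf_right _ inf_le_right
        _ = ⊥ := by rwa [inf_comm] at hyb
    have habS : a ⊓ b ∈ zdvSet L := ⟨hab, u, hx0, by rw [inf_comm]; exact h1⟩
    exact ⟨.cons (zdv_adj (v := ⟨a ⊓ b, habS⟩) h1 hx0)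
      (.cons (zdv_adj (u := ⟨a ⊓ b, habS⟩) h2 hab) .nil), by simp⟩

/-- If the zero-divisor graph of a lattice with 0 has a nonempty vertex set, then it is
connected and its diameter is at most 3. -/
theorem stmt0 {L : Type*} [Lattice L] [OrderBot L] (h : (zdvSet L).Nonempty) :
    (zdvGraph L).Connected ∧ (zdvGraph L).ediam ≤ 3 := by
  have := h.to_subtype
  constructor
  · exact ⟨fun u v => ⟨(zdv_walk u v).choose⟩⟩
  · refine SimpleGraph.ediam_le_of_edist_le fun u v => ?_
    obtain ⟨p, hp⟩ := zdv_walk u v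
    calc (zdvGraph L).edist u v ≤ p.length := SimpleGraph.edist_le p
      _ ≤ 3 := by exact_mod_cast hp
end

section
/- Let T₁ and T₂ be finite rooted trees each of whose root has at least two children. Then the non-ancestor graphs G(T₁) and G(T₂) are isomorphic if and only if T₁ and T₂ are isomorphic as rooted trees. -/
section Helpers
variable {α : Type*} [PartialOrder α] [Fintype α]

lemma exists_covby_le' {x y : α} (h : x < y) : ∃ c, x ⋖ c ∧ c ≤ y := by
  obtain ⟨c, ⟨hxc, hcy⟩, hmin⟩ :=
    wellFounded_lt.has_min {z : α | x < z ∧ z ≤ y} ⟨y, h, le_rfl⟩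
  exact ⟨c, ⟨hxc, fun z hz1 hz2 => hmin z ⟨hz1, hz2.le.trans hcy⟩ hz2⟩, hcy⟩

lemma exists_le_covby' {x y : α} (h : x < y) : ∃ c, x ≤ c ∧ c ⋖ y := by
  obtain ⟨c, ⟨hxc, hcy⟩, hmax⟩ :=
    wellFounded_gt.has_min {z : α | x ≤ z ∧ z < y} ⟨x, le_rfl, h⟩
  exact ⟨c, hxc, hcy, fun z hz1 hz2 => hmax z ⟨hxc.trans hz1.le, hz2⟩ hz1⟩

end Helpers

/-- tree condition -/
def HT (α : Type*) [PartialOrder α] [OrderTop α] : Prop := ∀ x : α, x ≠ ⊤ → ∃! y, x ⋖ y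

section Tree
variable {α : Type*} [PartialOrder α] [Fintype α] [OrderTop α]

lemma up_comp (ht : HT α) (x : α) : ∀ y z : α, x ≤ y → x ≤ z → y ≤ z ∨ z ≤ y := by
  refine WellFounded.induction (wellFounded_gt)
    (C := fun x => ∀ y z : α, x ≤ y → x ≤ z → y ≤ z ∨ z ≤ y) x ?_
  intro x IH y z hxy hxz
  rcases eq_or_lt_of_le hxy with rfl | hxy'
  · exact Or.inl hxz
  rcases eq_or_lt_of_le hxz with rfl | hxz'
  · exact Or.inr hxy'.le
  have hx : x ≠ ⊤ := by rintro rfl; exact (not_top_lt hxy').elim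
  obtain ⟨c, hc, hu⟩ := ht x hx
  obtain ⟨c1, hc1, hc1y⟩ := exists_covby_le' hxy'
  obtain ⟨c2, hc2, hc2z⟩ := exists_covby_le' hxz'
  rw [hu c1 hc1] at hc1y
  rw [hu c2 hc2] at hc2z
  exact IH c hc.lt y z hc1y hc2z

lemma coatom_unique (ht : HT α) {a b x : α} (ha : a ⋖ ⊤) (hb : b ⋖ ⊤)
    (hxa : x ≤ a) (hxb : x ≤ b) : a = b := by
  rcases up_comp ht x a b hxa hxb with h | h
  · rcases eq_or_lt_of_le h with rfl | h'
    · rfl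
    · exact absurd hb.lt (ha.2 h')
  · rcases eq_or_lt_of_le h with rfl | h'
    · rfl
    · exact absurd ha.lt (hb.2 h')

open Classical in
noncomputable def brF (x : α) : α := if h : x < ⊤ then (exists_le_covby' h).choose else ⊤

lemma brF_le {x : α} (h : x ≠ ⊤) : x ≤ brF x := by
  have h' : x < ⊤ := lt_top_iff_ne_top.mpr h
  rw [brF, dif_pos h']
  exact (exists_le_covby' h').choose_spec.1

lemma brF_coatom {x : α} (h : x ≠ ⊤) : brF x ⋖ ⊤ := by
  have h' : x < ⊤ := lt_top_iff_ne_top.mpr h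
  rw [brF, dif_pos h']
  exact (exists_le_covby' h').choose_spec.2

lemma brF_eq (ht : HT α) {x a : α} (hxa : x ≤ a) (ha : a ⋖ ⊤) : brF x = a := by
  have hx : x ≠ ⊤ := (hxa.trans_lt ha.lt).ne
  exact coatom_unique ht (brF_coatom hx) ha (brF_le hx) hxa

lemma brF_comp (ht : HT α) {x y : α} (hxy : x ≤ y) (hy : y ≠ ⊤) : brF x = brF y :=
  brF_eq ht (hxy.trans (brF_le hy)) (brF_coatom hy)

def branchTop (a : α) : OrderTop {x : α // x ≤ a} :=
  { top := ⟨a, le_rfl⟩, le_top := fun b => b.2 }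

lemma branch_ht (ht : HT α) (a : α) : @HT {x : α // x ≤ a} _ (branchTop a) := by
  intro x hx
  have hxa : x.val ≠ a := fun h => hx (Subtype.ext h)
  have hxlt : x.val < a := lt_of_le_of_ne x.2 hxa
  have hxt : x.val ≠ ⊤ := by
    intro h
    rw [h] at hxlt
    exact not_top_lt hxlt
  obtain ⟨c, hc, hu⟩ := ht x.val hxt
  obtain ⟨c', hc', hc'a⟩ := exists_covby_le' hxlt
  have hcc : c' = c := hu c' hc'
  subst hcc
  refine ⟨⟨c', hc'a⟩, ⟨?_, ?_⟩, ?_⟩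
  · exact Subtype.mk_lt_mk.mpr hc'.lt
  · intro z hz1 hz2
    exact hc'.2 (Subtype.mk_lt_mk.mp (by exact_mod_cast hz1)) (Subtype.mk_lt_mk.mp (by exact_mod_cast hz2))
  · intro y hy
    have hyv : x.val ⋖ y.val := by
      refine ⟨Subtype.mk_lt_mk.mp (by exact_mod_cast hy.1), ?_⟩
      intro w hw1 hw2
      have hwa : w ≤ a := hw2.le.trans y.2
      exact hy.2 (show x < (⟨w, hwa⟩ : {x : α // x ≤ a}) from Subtype.mk_lt_mk.mpr hw1)
        (show (⟨w, hwa⟩ : {x : α // x ≤ a}) < y from Subtype.mk_lt_mk.mpr hw2)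
    exact Subtype.ext (hu y.val hyv)

end Tree

section Swap
variable {α : Type*} [PartialOrder α] [DecidableEq α]

lemma comp_swap {u v : α} (hu : ∀ z, u ≤ z ∨ z ≤ u) (hv : ∀ z, v ≤ z ∨ z ≤ v) (x y : α) :
    (x ≤ y ∨ y ≤ x) ↔ (Equiv.swap u v x ≤ Equiv.swap u v y ∨ Equiv.swap u v y ≤ Equiv.swap u v x) := by
  have H : ∀ p q : α, (p ≤ q ∨ q ≤ p) →
      (Equiv.swap u v p ≤ Equiv.swap u v q ∨ Equiv.swap u v q ≤ Equiv.swap u v p) := by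
    intro p q hpq
    have swap_univ : ∀ w : α, (w = u ∨ w = v) → ∀ z : α,
        Equiv.swap u v w ≤ z ∨ z ≤ Equiv.swap u v w := by
      rintro w (rfl | rfl) z
      · rw [Equiv.swap_apply_left]; exact hv z
      · rw [Equiv.swap_apply_right]; exact hu z
    by_cases hp : p = u ∨ p = v
    · exact swap_univ p hp _
    by_cases hq : q = u ∨ q = v
    · exact (swap_univ q hq _).symm
    push_neg at hp hq
    rw [Equiv.swap_apply_of_ne_of_ne hp.1 hp.2, Equiv.swap_apply_of_ne_of_ne hq.1 hq.2]
    exact hpq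
  constructor
  · exact H x y
  · intro h
    have := H _ _ h
    simpa [Equiv.swap_apply_self] using this

end Swap

universe u v

theorem key (n : ℕ) : ∀ {α : Type u} {β : Type v}
    [PartialOrder α] [Fintype α] [OrderTop α]
    [PartialOrder β] [Fintype β] [OrderTop β],
    HT α → HT β → Fintype.card α = n → ∀ e : α ≃ β,
    (∀ x y : α, (x ≤ y ∨ y ≤ x) ↔ (e x ≤ e y ∨ e y ≤ e x)) → Nonempty (α ≃o β) := by
  induction n using Nat.strong_induction_on with
  | _ n IH =>
  intro α β _ _ _ _ _ _ ht1 ht2 hcard e0 he0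
  classical
  subst hcard
  -- normalize so that ⊤ ↦ ⊤
  obtain ⟨e, he, hetop⟩ : ∃ e : α ≃ β,
      (∀ x y : α, (x ≤ y ∨ y ≤ x) ↔ (e x ≤ e y ∨ e y ≤ e x)) ∧ e ⊤ = ⊤ := by
    by_cases h : e0 ⊤ = ⊤
    · exact ⟨e0, he0, h⟩
    · have hx₀u : ∀ z : α, e0.symm ⊤ ≤ z ∨ z ≤ e0.symm ⊤ := by
        intro z
        refine (he0 (e0.symm ⊤) z).mpr ?_
        rw [Equiv.apply_symm_apply]
        exact Or.inr le_top
      refine ⟨(Equiv.swap ⊤ (e0.symm ⊤)).trans e0, ?_, ?_⟩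
      · intro x y
        simp only [Equiv.trans_apply]
        rw [← he0]
        exact comp_swap (fun z => Or.inr le_top) hx₀u x y
      · show e0 (Equiv.swap ⊤ (e0.symm ⊤) ⊤) = ⊤
        rw [Equiv.swap_apply_left, Equiv.apply_symm_apply]
  clear he0 e0
  rcases le_or_gt (Fintype.card α) 1 with hle | hlt
  · haveI : Subsingleton α := Fintype.card_le_one_iff_subsingleton.mp hle
    exact ⟨⟨e, fun {a b} => iff_of_true (by rw [Subsingleton.elim a b]) (by rw [Subsingleton.elim a b])⟩⟩
  -- main case
  have esymm_top : e.symm ⊤ = ⊤ := by rw [← hetop, Equiv.symm_apply_apply]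
  have he' : ∀ u' v' : β, (u' ≤ v' ∨ v' ≤ u') ↔
      (e.symm u' ≤ e.symm v' ∨ e.symm v' ≤ e.symm u') := by
    intro u' v'
    have h := he (e.symm u') (e.symm v')
    rw [Equiv.apply_symm_apply, Equiv.apply_symm_apply] at h
    exact h.symm
  have etop_ne : ∀ {x : α}, x ≠ ⊤ → e x ≠ ⊤ := by
    intro x hx h
    exact hx (by rw [← esymm_top, ← h, Equiv.symm_apply_apply])
  have esymmtop_ne : ∀ {y : β}, y ≠ ⊤ → e.symm y ≠ ⊤ := by
    intro y hy h
    exact hy (by rw [← hetop, ← h, Equiv.apply_symm_apply])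
  -- the image of a branch is contained in a branch
  have hbr : ∀ a : α, a ⋖ ⊤ → ∀ x : α, x ≤ a → e x ≤ brF (e a) := by
    intro a ha x hxa
    have hane : a ≠ ⊤ := ha.lt.ne
    have hxne : x ≠ ⊤ := (hxa.trans_lt ha.lt).ne
    have heane : e a ≠ ⊤ := etop_ne hane
    have hexne : e x ≠ ⊤ := etop_ne hxne
    rcases (he x a).mp (Or.inl hxa) with h | h
    · exact h.trans (brF_le heane)
    · rw [brF_comp ht2 h hexne]
      exact brF_le hexne
  have hbr' : ∀ a : α, a ⋖ ⊤ → ∀ y : β, y ≤ brF (e a) → e.symm y ≤ a := by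
    intro a ha y hy
    have heane : e a ≠ ⊤ := etop_ne ha.lt.ne
    have ha' : brF (e a) ⋖ ⊤ := brF_coatom heane
    have hyne : y ≠ ⊤ := (hy.trans_lt ha'.lt).ne
    have hsa'ne : e.symm (brF (e a)) ≠ ⊤ := esymmtop_ne ha'.lt.ne
    have hsyne : e.symm y ≠ ⊤ := esymmtop_ne hyne
    have h2 : a ≤ e.symm (brF (e a)) ∨ e.symm (brF (e a)) ≤ a := by
      have := (he' (e a) (brF (e a))).mp (Or.inl (brF_le heane))
      rwa [Equiv.symm_apply_apply] at this
    have hbs : brF (e.symm (brF (e a))) = a := by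
      rcases h2 with h | h
      · rw [← brF_comp ht1 h hsa'ne]
        exact brF_eq ht1 le_rfl ha
      · exact brF_eq ht1 h ha
    have hba : brF (e.symm y) = a := by
      rcases (he' y (brF (e a))).mp (Or.inl hy) with h | h
      · rw [brF_comp ht1 h hsa'ne, hbs]
      · rw [← brF_comp ht1 h hsyne]
        exact hbs
    calc e.symm y ≤ brF (e.symm y) := brF_le hsyne
    _ = a := hba
  -- branch isomorphisms via the induction hypothesis
  have hiso : ∀ a : α, a ⋖ ⊤ → Nonempty ({x : α // x ≤ a} ≃o {y : β // y ≤ brF (e a)}) := by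
    intro a ha
    haveI : DecidablePred (fun x : α => x ≤ a) := Classical.decPred _
    haveI : DecidablePred (fun y : β => y ≤ brF (e a)) := Classical.decPred _
    letI i1 : OrderTop {x : α // x ≤ a} := branchTop a
    letI i2 : OrderTop {y : β // y ≤ brF (e a)} := branchTop (brF (e a))
    have hclt : Fintype.card {x : α // x ≤ a} < Fintype.card α :=
      Fintype.card_subtype_lt (p := fun x : α => x ≤ a) (x := ⊤)
        (by show ¬(⊤:α) ≤ a; rw [top_le_iff]; exact ha.lt.ne)
    refine IH _ hclt (branch_ht ht1 a) (branch_ht ht2 (brF (e a))) rfl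
      ⟨fun x => ⟨e x.1, hbr a ha x.1 x.2⟩, fun y => ⟨e.symm y.1, hbr' a ha y.1 y.2⟩,
        fun x => Subtype.ext (e.symm_apply_apply x.1), fun y => Subtype.ext (e.apply_symm_apply y.1)⟩
      ?_
    intro x y
    simpa [Subtype.mk_le_mk, Subtype.coe_le_coe] using he x.1 y.1
  -- the glued map
  set F : α → β := fun x =>
    if hx : x = ⊤ then ⊤ else ((hiso (brF x) (brF_coatom hx)).some ⟨x, brF_le hx⟩).1 with hFdef
  have hFtop : F ⊤ = ⊤ := by rw [hFdef]; simp
  have F_spec : ∀ (x : α) (hx : x ≠ ⊤) (a : α) (ha : a ⋖ ⊤) (hxa : x ≤ a),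
      F x = ((hiso a ha).some ⟨x, hxa⟩).1 := by
    intro x hx a ha hxa
    rcases brF_eq ht1 hxa ha with rfl
    rw [hFdef]
    simp only [dif_neg hx]
  have hFle : ∀ (x : α) (hx : x ≠ ⊤), F x ≤ brF (e (brF x)) := by
    intro x hx
    rw [hFdef]
    simp only [dif_neg hx]
    exact ((hiso (brF x) (brF_coatom hx)).some ⟨x, brF_le hx⟩).2
  have hFne : ∀ (x : α), x ≠ ⊤ → F x ≠ ⊤ ∧ brF (F x) = brF (e (brF x)) := by
    intro x hx
    have h1 : F x ≤ brF (e (brF x)) := hFle x hx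
    have hcoat : brF (e (brF x)) ⋖ ⊤ := brF_coatom (etop_ne (brF_coatom hx).lt.ne)
    exact ⟨(h1.trans_lt hcoat.lt).ne, brF_eq ht2 h1 hcoat⟩
  -- injectivity of the coatom correspondence
  have hinj : ∀ a b : α, a ⋖ ⊤ → b ⋖ ⊤ → brF (e a) = brF (e b) → a = b := by
    have keyc : ∀ c : α, c ⋖ ⊤ → brF (e.symm (brF (e c))) = c := by
      intro c hc
      have hecne : e c ≠ ⊤ := etop_ne hc.lt.ne
      have hcoat : brF (e c) ⋖ ⊤ := brF_coatom hecne
      have hsne : e.symm (brF (e c)) ≠ ⊤ := esymmtop_ne hcoat.lt.ne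
      have h2 : c ≤ e.symm (brF (e c)) ∨ e.symm (brF (e c)) ≤ c := by
        have := (he' (e c) (brF (e c))).mp (Or.inl (brF_le hecne))
        rwa [Equiv.symm_apply_apply] at this
      rcases h2 with h | h
      · rw [← brF_comp ht1 h hsne]
        exact brF_eq ht1 le_rfl hc
      · exact brF_eq ht1 h hc
    intro a b ha hb hab
    rw [← keyc a ha, ← keyc b hb, hab]
  -- the order-reflecting property
  have le_iff : ∀ x y : α, F x ≤ F y ↔ x ≤ y := by
    intro x y
    by_cases hy : y = ⊤
    · subst hy
      rw [hFtop]
      simp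
    by_cases hx : x = ⊤
    · subst hx
      rw [hFtop, top_le_iff, top_le_iff]
      exact iff_of_false (hFne y hy).1 hy
    by_cases hb : brF x = brF y
    · have hy' : y ≤ brF x := hb ▸ brF_le hy
      rw [F_spec x hx (brF x) (brF_coatom hx) (brF_le hx),
          F_spec y hy (brF x) (brF_coatom hx) hy',
          Subtype.coe_le_coe, OrderIso.le_iff_le, Subtype.mk_le_mk]
    · refine iff_of_false ?_ ?_
      · intro h
        refine hb (hinj _ _ (brF_coatom hx) (brF_coatom hy) ?_)
        rw [← (hFne x hx).2, ← (hFne y hy).2]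
        exact brF_comp ht2 h (hFne y hy).1
      · intro h
        exact hb (brF_comp ht1 h hy)
  have hcards : Fintype.card α = Fintype.card β := Fintype.card_congr e
  have hFinj : Function.Injective F := fun x y h =>
    le_antisymm ((le_iff x y).mp h.le) ((le_iff y x).mp h.ge)
  have hFbij : Function.Bijective F :=
    (Fintype.bijective_iff_injective_and_card F).mpr ⟨hFinj, hcards⟩
  exact ⟨{ toEquiv := Equiv.ofBijective F hFbij, map_rel_iff' := fun {x y} => le_iff x y }⟩



/-- The non-ancestor (incomparability) graph on the non-top elements of a partial order,
viewing the order as the ancestor order of a rooted tree with root the top element. -/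
def nonAncestorGraph (T : Type*) [PartialOrder T] [OrderTop T] :
    SimpleGraph {t : T // t ≠ ⊤} where
  Adj x y := ¬ (x : T) ≤ (y : T) ∧ ¬ (y : T) ≤ (x : T)
  symm := ⟨fun x y ⟨h1, h2⟩ => ⟨h2, h1⟩⟩
  loopless := ⟨fun x ⟨h1, _⟩ => h1 le_rfl⟩

/-- For finite rooted trees (encoded via their ancestor orders: finite partial orders with a
top where every non-top element has a unique upper cover) whose roots each have at least two
children, the non-ancestor graphs are isomorphic iff the trees are isomorphic. -/
theorem stmt18 {T₁ T₂ : Type*}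
    [PartialOrder T₁] [Fintype T₁] [OrderTop T₁]
    [PartialOrder T₂] [Fintype T₂] [OrderTop T₂]
    (h₁ : ∀ x : T₁, x ≠ ⊤ → ∃! y : T₁, x ⋖ y)
    (h₂ : ∀ x : T₂, x ≠ ⊤ → ∃! y : T₂, x ⋖ y)
    (hr₁ : ∃ a b : T₁, a ≠ b ∧ a ⋖ ⊤ ∧ b ⋖ ⊤)
    (hr₂ : ∃ a b : T₂, a ≠ b ∧ a ⋖ ⊤ ∧ b ⋖ ⊤) :
    Nonempty (nonAncestorGraph T₁ ≃g nonAncestorGraph T₂) ↔ Nonempty (T₁ ≃o T₂) := by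
  classical
  constructor
  · rintro ⟨f⟩
    set e : T₁ ≃ T₂ :=
      { toFun := fun x => if hx : x = ⊤ then ⊤ else (f ⟨x, hx⟩).1
        invFun := fun y => if hy : y = ⊤ then ⊤ else (f.symm ⟨y, hy⟩).1
        left_inv := by
          intro x
          by_cases hx : x = ⊤
          · simp [hx]
          · simp only [dif_neg hx]
            have h2 : (f ⟨x, hx⟩).1 ≠ ⊤ := (f ⟨x, hx⟩).2
            rw [dif_neg h2]
            have h3 : (⟨(f ⟨x, hx⟩).1, h2⟩ : {t : T₂ // t ≠ ⊤}) = f ⟨x, hx⟩ := rfl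
            rw [h3, RelIso.symm_apply_apply]
        right_inv := by
          intro y
          by_cases hy : y = ⊤
          · simp [hy]
          · simp only [dif_neg hy]
            have h2 : (f.symm ⟨y, hy⟩).1 ≠ ⊤ := (f.symm ⟨y, hy⟩).2
            rw [dif_neg h2]
            have h3 : (⟨(f.symm ⟨y, hy⟩).1, h2⟩ : {t : T₁ // t ≠ ⊤}) = f.symm ⟨y, hy⟩ := rfl
            rw [h3, RelIso.apply_symm_apply] } with hedef
    have hcomp : ∀ x y : T₁, (x ≤ y ∨ y ≤ x) ↔ (e x ≤ e y ∨ e y ≤ e x) := by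
      intro x y
      by_cases hx : x = ⊤
      · refine iff_of_true (hx ▸ Or.inr le_top) ?_
        have : e x = ⊤ := by rw [hedef]; simp [hx]
        rw [this]
        exact Or.inr le_top
      by_cases hy : y = ⊤
      · refine iff_of_true (hy ▸ Or.inl le_top) ?_
        have : e y = ⊤ := by rw [hedef]; simp [hy]
        rw [this]
        exact Or.inl le_top
      have hex : e x = (f ⟨x, hx⟩).1 := by rw [hedef]; simp [hx]
      have hey : e y = (f ⟨y, hy⟩).1 := by rw [hedef]; simp [hy]
      rw [hex, hey]
      have h := f.map_rel_iff (a := ⟨x, hx⟩) (b := ⟨y, hy⟩)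
      simp only [nonAncestorGraph] at h
      tauto
    exact key (Fintype.card T₁) h₁ h₂ rfl e hcomp
  · rintro ⟨o⟩
    have hto : ∀ x : T₁, x = ⊤ ↔ o x = ⊤ := by
      intro x
      constructor
      · rintro rfl; exact o.map_top
      · intro h; exact o.injective (h.trans o.map_top.symm)
    refine ⟨⟨Equiv.subtypeEquiv o.toEquiv (fun x => not_congr (hto x)), ?_⟩⟩
    intro a b
    show (¬(o a.1 : T₂) ≤ o b.1 ∧ ¬(o b.1 : T₂) ≤ o a.1) ↔ _
    simp [nonAncestorGraph, o.le_iff_le]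
end
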